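/- Let K be a finite field, d ≥ 0, and let φ: K → K be a field automorphism. Let a₀,…,a_d ∈ ℤ with a_d ≠ 0 and gcd(a₀,…,a_d) = 1, and suppose that a₀·s + a₁·φ(s) + ⋯ + a_d·φ^d(s) = 0 for all s ∈ K (where aᵢ·x means the scalar action of the integer aᵢ). Then there exist 0 ≤ i < j ≤ d with φ^i = φ^j; in particular the order of φ is at most d. -/
import Mathlib


/-- If a field automorphism φ of a finite field K satisfies the linear
relation a₀·s + a₁·φ(s) + ⋯ + a_d·φ^d(s) = 0 for all s, with a_d ≠ 0 and
gcd(a₀,…,a_d) = 1, then φ^i = φ^j for some 0 ≤ i < j ≤ d; in particular |φ| ≤ d. -/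
theorem stmt_7 (K : Type*) [Field K] [Fintype K] (φ : RingAut K) (d : ℕ) (a : ℕ → ℤ)
    (had : a d ≠ 0) (hgcd : Finset.gcd (Finset.range (d + 1)) a = 1)
    (hlin : ∀ s : K, ∑ i ∈ Finset.range (d + 1), a i • ((φ ^ i) s) = 0) :
    (∃ i j, i < j ∧ j ≤ d ∧ φ ^ i = φ ^ j) ∧ orderOf φ ≤ d := by
  have key : ∃ i j, i < j ∧ j ≤ d ∧ φ ^ i = φ ^ j := by
    by_contra h
    push_neg at h
    have hinj : Function.Injective
        (fun i : Fin (d + 1) => ((φ ^ (i : ℕ)).toRingHom.toMonoidHom : K →* K)) := by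
      intro i j hij
      have heq : φ ^ (i : ℕ) = φ ^ (j : ℕ) :=
        RingEquiv.ext fun x => DFunLike.congr_fun hij x
      rcases lt_trichotomy (i : ℕ) (j : ℕ) with hlt | heq' | hlt
      · exact absurd heq (h _ _ hlt (Nat.lt_succ_iff.mp j.isLt))
      · exact Fin.ext heq'
      · exact absurd heq.symm (h _ _ hlt (Nat.lt_succ_iff.mp i.isLt))
    have hli := (linearIndependent_monoidHom K K).comp _ hinj
    have hzero : ∀ i : Fin (d + 1), ((a (i : ℕ) : K)) = 0 := by
      apply Fintype.linearIndependent_iff.mp hli (fun i => ((a (i : ℕ) : K)))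
      funext s
      simp only [Finset.sum_apply, Pi.smul_apply, Function.comp_apply, smul_eq_mul,
        Pi.zero_apply, MonoidHom.coe_coe, RingHom.coe_coe]
      have h0 := hlin s
      rw [← Fin.sum_univ_eq_sum_range (fun i => a i • (φ ^ i) s)] at h0
      simpa [zsmul_eq_mul] using h0
    set p := ringChar K with hp
    have hpP : p.Prime := CharP.char_is_prime K p
    have hdvd : (p : ℤ) ∣ Finset.gcd (Finset.range (d + 1)) a := by
      apply Finset.dvd_gcd
      intro i hi
      have : ((a i : K)) = 0 := hzero ⟨i, Finset.mem_range.mp hi⟩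
      exact (CharP.intCast_eq_zero_iff K p (a i)).mp this
    rw [hgcd] at hdvd
    have : (p : ℤ) = 1 ∨ (p : ℤ) = -1 := Int.isUnit_iff.mp (isUnit_of_dvd_one hdvd)
    have h2 := hpP.one_lt
    rcases this with h1 | h1 <;> omega
  refine ⟨key, ?_⟩
  obtain ⟨i, j, hij, hjd, heq⟩ := key
  have h1 : φ ^ (j - i) = 1 := by
    have : φ ^ i * φ ^ (j - i) = φ ^ i * 1 := by
      rw [mul_one, ← pow_add, Nat.add_sub_cancel' hij.le, heq]
    exact mul_left_cancel this
  have hdvd := orderOf_dvd_of_pow_eq_one h1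
  exact le_trans (Nat.le_of_dvd (by omega) hdvd) (by omega)
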